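/- arXiv:2009.00389 — 4 statements merged into one kernel-verified Lean document; each statement's English description precedes it below -/
import Mathlib

section
/- Let μ be a probability measure on ℝ supported in [0, λ₊] with density ρ satisfying ρ(x) ∼ √(λ₊ − x) on [λ₊ − δ, λ₊] (two-sided comparison with constants). Fix a real exponent a ≥ 2. Then there exist constants such that for all z = E + iη with λ₊ ≤ E ≤ λ₊ + δ/2 and 0 < η ≤ 1: ∫ |x − z|^{−a} dμ(x) ≤ C · (|E − λ₊| + η)^{−(a − 3/2)}. -/
open MeasureTheory

lemma aux_mass (μ : Measure ℝ) (lam : ℝ) (ρ : ℝ → ℝ) (c C δ : ℝ) (hc : 0 < c) (hδ : 0 < δ)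
    (hdens : ∀ s : Set ℝ, MeasurableSet s → s ⊆ Set.Icc (lam - δ) lam →
      μ s = ENNReal.ofReal (∫ x in s, ρ x))
    (hlow : ∀ x ∈ Set.Icc (lam - δ) lam, c * Real.sqrt (lam - x) ≤ ρ x)
    (hupp : ∀ x ∈ Set.Icc (lam - δ) lam, ρ x ≤ C * Real.sqrt (lam - x))
    (s : ℝ) (hs0 : 0 ≤ s) (hsδ : s ≤ δ) :
    μ (Set.Icc (lam - s) lam) ≤ ENNReal.ofReal (2 * C / 3 * s ^ ((3:ℝ)/2)) := by
  have hsub : Set.Icc (lam - s) lam ⊆ Set.Icc (lam - δ) lam :=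
    Set.Icc_subset_Icc (by linarith) le_rfl
  rw [hdens _ measurableSet_Icc hsub]
  apply ENNReal.ofReal_le_ofReal
  have hint : IntegrableOn (fun x => C * Real.sqrt (lam - x)) (Set.Icc (lam - s) lam) := by
    apply Continuous.integrableOn_Icc
    fun_prop
  have hmono : (∫ x in Set.Icc (lam - s) lam, ρ x)
      ≤ ∫ x in Set.Icc (lam - s) lam, C * Real.sqrt (lam - x) := by
    apply integral_mono_of_nonneg
    · filter_upwards [ae_restrict_mem measurableSet_Icc] with x hx
      exact le_trans (by positivity) (hlow x (hsub hx))
    · exact hint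
    · filter_upwards [ae_restrict_mem measurableSet_Icc] with x hx
      exact hupp x (hsub hx)
  refine hmono.trans (le_of_eq ?_)
  rw [integral_Icc_eq_integral_Ioc, ← intervalIntegral.integral_of_le (by linarith),
    intervalIntegral.integral_const_mul, intervalIntegral.integral_comp_sub_left _ lam]
  simp_rw [Real.sqrt_eq_rpow]
  rw [sub_self, sub_sub_cancel, integral_rpow (Or.inl (by norm_num))]
  have h32 : (1/2 + 1 : ℝ) = 3/2 := by norm_num
  rw [h32, Real.zero_rpow (by norm_num)]
  ring

lemma aux_ftc (d p t T : ℝ) (hd : 0 < d) (ht : 0 ≤ t) (hT : t ≤ T) (hp : p ≠ -1) :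
    ∫ s in t..T, (d + s) ^ p = ((d + T) ^ (p+1) - (d + t) ^ (p+1)) / (p+1) := by
  rw [intervalIntegral.integral_comp_add_left (fun x => x ^ p) d]
  exact integral_rpow (Or.inr ⟨hp, Set.notMem_uIcc_of_lt (by linarith) (by linarith)⟩)

lemma aux_int (d p t T : ℝ) (hd : 0 < d) (ht : 0 ≤ t) (hT : t ≤ T) :
    IntegrableOn (fun s => (d + s) ^ p) (Set.Ioc t T) := by
  apply (ContinuousOn.integrableOn_Icc ?_).mono_set Set.Ioc_subset_Icc_self
  apply ContinuousOn.rpow_const (by fun_prop)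
  intro x hx
  have : 0 < d + x := by nlinarith [hx.1]
  exact Or.inl this.ne'

lemma aux_g (d a δ : ℝ) (hd : 0 < d) (hδ : 0 < δ) (ha : 2 ≤ a) (t : ℝ) (ht0 : 0 ≤ t) (htδ : t ≤ δ) :
    ENNReal.ofReal ((d + t) ^ (-a)) = ENNReal.ofReal ((d + δ) ^ (-a)) +
      ∫⁻ s in Set.Ioc 0 δ,
        (Set.Ici t).indicator (fun s => ENNReal.ofReal (a * (d + s) ^ (-(a+1)))) s := by
  have ha0 : (0:ℝ) < a := by linarith
  have h1 : ∫⁻ s in Set.Ioc 0 δ,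
      (Set.Ici t).indicator (fun s => ENNReal.ofReal (a * (d + s) ^ (-(a+1)))) s
      = ∫⁻ s in Set.Ioc t δ, ENNReal.ofReal (a * (d + s) ^ (-(a+1))) := by
    rw [lintegral_indicator measurableSet_Ici, Measure.restrict_restrict measurableSet_Ici]
    congr 1
    apply Measure.restrict_congr_set
    rw [MeasureTheory.ae_eq_set]
    refine ⟨measure_mono_null (fun x hx => ?_) (measure_singleton t),
      measure_mono_null (fun x hx => ?_) (measure_empty (μ := (volume : MeasureTheory.Measure ℝ)))⟩
    · show x ∈ ({t} : Set ℝ)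
      simp only [Set.mem_diff, Set.mem_inter_iff, Set.mem_Ici, Set.mem_Ioc, Set.mem_singleton_iff] at hx ⊢
      rcases hx with ⟨⟨h1, h2, h3⟩, h4⟩
      by_contra hne
      exact h4 ⟨lt_of_le_of_ne h1 (Ne.symm hne), h3⟩
    · show x ∈ (∅ : Set ℝ)
      simp only [Set.mem_diff, Set.mem_inter_iff, Set.mem_Ici, Set.mem_Ioc] at hx
      rcases hx with ⟨⟨h1, h2⟩, h3⟩
      exact absurd ⟨h1.le, lt_of_le_of_lt ht0 h1, h2⟩ h3
  have h2 : ∫⁻ s in Set.Ioc t δ, ENNReal.ofReal (a * (d + s) ^ (-(a+1)))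
      = ENNReal.ofReal (∫ s in t..δ, a * (d + s) ^ (-(a+1))) := by
    rw [intervalIntegral.integral_of_le htδ]
    rw [ofReal_integral_eq_lintegral_ofReal]
    · exact (aux_int d (-(a+1)) t δ hd ht0 htδ).const_mul a
    · filter_upwards [ae_restrict_mem measurableSet_Ioc] with x hx
      have : 0 < d + x := by nlinarith [hx.1]
      positivity
  have h3 : (∫ s in t..δ, a * (d + s) ^ (-(a+1)))
      = (d + t) ^ (-a) - (d + δ) ^ (-a) := by
    rw [intervalIntegral.integral_const_mul, aux_ftc d (-(a+1)) t δ hd ht0 htδ (by linarith)]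
    have he : -(a+1) + 1 = -a := by ring
    rw [he, ← mul_div_assoc, div_eq_iff (neg_ne_zero.2 ha0.ne')]
    ring
  rw [h1, h2, h3, ← ENNReal.ofReal_add (by positivity) ?hnn]
  · congr 1; ring
  case hnn =>
    have hle : (d + δ) ^ (-a) ≤ (d + t) ^ (-a) :=
      Real.rpow_le_rpow_of_nonpos (by linarith) (by linarith) (by linarith)
    linarith

open scoped ENNReal
set_option maxHeartbeats 2000000 in
/-- For a probability measure `μ` supported in `[0, λ₊]` with density comparable
to `√(λ₊ - x)` near the right edge, and any fixed exponent `a ≥ 2`, there is a constant `C'`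
such that for `λ₊ ≤ E ≤ λ₊ + δ/2` and `0 < η ≤ 1`,
`∫ |x - z|^{-a} dμ(x) ≤ C' (|E - λ₊| + η)^{-(a - 3/2)}` with `z = E + iη`. -/
theorem stmt_7 (μ : Measure ℝ) [IsProbabilityMeasure μ] (lam : ℝ) (ρ : ℝ → ℝ)
    (c C δ : ℝ) (hc : 0 < c) (hcC : c ≤ C) (hδ : 0 < δ) (a : ℝ) (ha : 2 ≤ a)
    (hsupp0 : μ (Set.Iio 0) = 0) (hsupp1 : μ (Set.Ioi lam) = 0)
    (hdens : ∀ s : Set ℝ, MeasurableSet s → s ⊆ Set.Icc (lam - δ) lam →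
      μ s = ENNReal.ofReal (∫ x in s, ρ x))
    (hlow : ∀ x ∈ Set.Icc (lam - δ) lam, c * Real.sqrt (lam - x) ≤ ρ x)
    (hupp : ∀ x ∈ Set.Icc (lam - δ) lam, ρ x ≤ C * Real.sqrt (lam - x)) :
    ∃ C' : ℝ, 0 < C' ∧
      ∀ E η : ℝ, lam ≤ E → E ≤ lam + δ / 2 → 0 < η → η ≤ 1 →
        (∫ x, ‖(x : ℂ) - ((E : ℂ) + (η : ℂ) * Complex.I)‖ ^ (-a) ∂μ) ≤
          C' * (|E - lam| + η) ^ (-(a - 3 / 2)) := by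
  have hC : 0 < C := lt_of_lt_of_le hc hcC
  have ha0 : (0:ℝ) < a := by linarith
  refine ⟨2 ^ a * (2*C/3 + 4*C*a/3) + δ ^ (-a) * (δ/2 + 1) ^ (a - 3/2), by positivity, ?_⟩
  intro E η hE1 hE2 hη1 hη2
  set C' : ℝ := 2 ^ a * (2*C/3 + 4*C*a/3) + δ ^ (-a) * (δ/2 + 1) ^ (a - 3/2) with hC'def
  set d : ℝ := (E - lam) + η with hddef
  have hd : 0 < d := by simp only [hddef]; linarith
  have hd1 : d ≤ δ/2 + 1 := by simp only [hddef]; linarith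
  set z : ℂ := (E:ℂ) + (η:ℂ) * Complex.I with hz
  set f : ℝ → ℝ := fun x => ‖(x:ℂ) - z‖ ^ (-a) with hf
  have him : ∀ x : ℝ, ((x:ℂ) - z).im = -η := by intro x; simp [hz]
  have hre : ∀ x : ℝ, ((x:ℂ) - z).re = x - E := by intro x; simp [hz]
  have habs_η : ∀ x : ℝ, η ≤ ‖(x:ℂ) - z‖ := by
    intro x
    calc η = |(((x:ℂ) - z).im)| := by rw [him x, abs_neg, abs_of_pos hη1]
    _ ≤ _ := Complex.abs_im_le_norm _
  have habs_re : ∀ x : ℝ, x ≤ lam → E - x ≤ ‖(x:ℂ) - z‖ := by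
    intro x hx
    calc E - x ≤ |(((x:ℂ) - z).re)| := by
          rw [hre x, abs_sub_comm, abs_of_nonneg (by linarith)]
    _ ≤ _ := Complex.abs_re_le_norm _
  have habs_pos : ∀ x : ℝ, 0 < ‖(x:ℂ) - z‖ := fun x => lt_of_lt_of_le hη1 (habs_η x)
  have hfpos : ∀ x : ℝ, 0 ≤ f x := fun x => Real.rpow_nonneg (norm_nonneg _) _
  have hfmeas : Measurable f := by
    have hcont : Continuous f :=
      (continuous_norm.comp (by fun_prop)).rpow_const (fun x => Or.inl (habs_pos x).ne')
    exact hcont.measurable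
  rw [integral_eq_lintegral_of_nonneg_ae (Filter.Eventually.of_forall hfpos) hfmeas.aestronglyMeasurable]
  have hrw : (|E - lam| + η) ^ (-(a - 3/2)) = d ^ ((3:ℝ)/2 - a) := by
    rw [abs_of_nonneg (by linarith : (0:ℝ) ≤ E - lam), hddef]
    congr 1
    ring
  rw [hrw]
  apply ENNReal.toReal_le_of_le_ofReal (by positivity)
  -- now the lintegral bound
  set A : Set ℝ := Set.Icc (lam - δ) lam with hA
  set φ : ℝ → ℝ≥0∞ := fun s => ENNReal.ofReal (a * (d + s) ^ (-(a+1))) with hφ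
  have hmass : ∀ s, 0 ≤ s → s ≤ δ → μ (Set.Icc (lam - s) lam) ≤
      ENNReal.ofReal (2*C/3 * s ^ ((3:ℝ)/2)) :=
    aux_mass μ lam ρ c C δ hc hδ hdens hlow hupp
  have hsplit : ∫⁻ x, ENNReal.ofReal (f x) ∂μ
      = (∫⁻ x in A, ENNReal.ofReal (f x) ∂μ) + ∫⁻ x in Aᶜ, ENNReal.ofReal (f x) ∂μ :=
    (lintegral_add_compl _ measurableSet_Icc).symm
  -- far field
  have hlamle : ∀ᵐ x ∂μ, x ≤ lam := by
    have h := measure_eq_zero_iff_ae_notMem.mp hsupp1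
    filter_upwards [h] with x hx
    simpa using hx
  have hfar : ∫⁻ x in Aᶜ, ENNReal.ofReal (f x) ∂μ ≤ ENNReal.ofReal (δ ^ (-a)) := by
    have hb : ∀ᵐ x ∂(μ.restrict Aᶜ), ENNReal.ofReal (f x) ≤ ENNReal.ofReal (δ ^ (-a)) := by
      filter_upwards [ae_restrict_of_ae hlamle, ae_restrict_mem measurableSet_Icc.compl]
        with x h1 h2
      apply ENNReal.ofReal_le_ofReal
      have hx : x < lam - δ := by
        by_contra h
        push_neg at h
        exact h2 ⟨h, h1⟩
      have hδb : δ ≤ ‖(x:ℂ) - z‖ := le_trans (by linarith) (habs_re x h1)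
      exact Real.rpow_le_rpow_of_nonpos hδ hδb (by linarith)
    calc ∫⁻ x in Aᶜ, ENNReal.ofReal (f x) ∂μ
        ≤ ∫⁻ _ in Aᶜ, ENNReal.ofReal (δ^(-a)) ∂μ := lintegral_mono_ae hb
      _ = ENNReal.ofReal (δ^(-a)) * μ Aᶜ := setLIntegral_const _ _
      _ ≤ ENNReal.ofReal (δ^(-a)) * 1 := mul_le_mul_right prob_le_one _
      _ = ENNReal.ofReal (δ^(-a)) := mul_one _
  -- near field: pointwise bound by (d + (lam - x))^(-a)
  have hptA : ∀ x ∈ A, ENNReal.ofReal (f x) ≤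
      ENNReal.ofReal ((2:ℝ)^a) * ENNReal.ofReal ((d + (lam - x)) ^ (-a)) := by
    intro x hx
    rw [← ENNReal.ofReal_mul (by positivity)]
    apply ENNReal.ofReal_le_ofReal
    have ht0 : 0 ≤ lam - x := by linarith [hx.2]
    have hdt : 0 < d + (lam - x) := by linarith
    have hhalf : (d + (lam - x)) / 2 ≤ ‖(x:ℂ) - z‖ := by
      have h1 := habs_η x
      have h2 := habs_re x hx.2
      have h3 : E - x = (E - lam) + (lam - x) := by ring
      simp only [hddef]
      linarith
    calc f x ≤ ((d + (lam - x))/2) ^ (-a) :=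
          Real.rpow_le_rpow_of_nonpos (by positivity) hhalf (by linarith)
      _ = 2^a * (d + (lam-x))^(-a) := by
          rw [Real.div_rpow hdt.le (by norm_num), Real.rpow_neg (by norm_num : (0:ℝ) ≤ 2),
            div_eq_mul_inv, inv_inv, mul_comm]
  have hnear1 : (∫⁻ x in A, ENNReal.ofReal (f x) ∂μ) ≤
      ENNReal.ofReal ((2:ℝ)^a) * ∫⁻ x in A, ENNReal.ofReal ((d + (lam - x))^(-a)) ∂μ := by
    rw [← lintegral_const_mul' _ _ ENNReal.ofReal_ne_top]
    apply lintegral_mono_ae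
    filter_upwards [ae_restrict_mem measurableSet_Icc] with x hx using hptA x hx
  have hgrw : ∀ x ∈ A, ENNReal.ofReal ((d + (lam - x))^(-a)) =
      ENNReal.ofReal ((d+δ)^(-a)) + ∫⁻ s in Set.Ioc 0 δ, (Set.Ici (lam - x)).indicator φ s :=
    fun x hx => aux_g d a δ hd hδ ha (lam - x) (by linarith [hx.2]) (by linarith [hx.1])
  have hnear2 : (∫⁻ x in A, ENNReal.ofReal ((d + (lam-x))^(-a)) ∂μ)
      = ENNReal.ofReal ((d+δ)^(-a)) * μ A
        + ∫⁻ x in A, (∫⁻ s in Set.Ioc 0 δ, (Set.Ici (lam-x)).indicator φ s) ∂μ := by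
    rw [setLIntegral_congr_fun measurableSet_Icc hgrw,
      lintegral_add_left measurable_const, setLIntegral_const]
  have hφmeas : Measurable φ := by rw [hφ]; fun_prop
  have hswap : (∫⁻ x in A, (∫⁻ s in Set.Ioc 0 δ, (Set.Ici (lam-x)).indicator φ s) ∂μ)
      = ∫⁻ s in Set.Ioc 0 δ, (∫⁻ x in A, (Set.Ici (lam-x)).indicator φ s ∂μ) := by
    apply lintegral_lintegral_swap
    have heq : (fun p : ℝ × ℝ => (Set.Ici (lam - p.1)).indicator φ p.2)
        = fun p : ℝ × ℝ => Set.indicator {q : ℝ × ℝ | lam ≤ q.1 + q.2} (fun q => φ q.2) p := by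
      ext p
      simp only [Set.indicator_apply, Set.mem_Ici, Set.mem_setOf_eq]
      by_cases h : lam - p.1 ≤ p.2
      · rw [if_pos h, if_pos (by linarith)]
      · rw [if_neg h, if_neg (fun hh => h (by linarith))]
    show AEMeasurable (fun p : ℝ × ℝ => (Set.Ici (lam - p.1)).indicator φ p.2) _
    rw [heq]
    exact ((hφmeas.comp measurable_snd).indicator
      (measurableSet_le measurable_const (measurable_fst.add measurable_snd))).aemeasurable
  have hswap_le : (∫⁻ s in Set.Ioc 0 δ, (∫⁻ x in A, (Set.Ici (lam-x)).indicator φ s ∂μ))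
      ≤ ∫⁻ s in Set.Ioc 0 δ,
          ENNReal.ofReal (2*C*a/3) * ENNReal.ofReal ((d+s) ^ ((1:ℝ)/2 - a)) := by
    apply lintegral_mono_ae
    rw [ae_restrict_iff' measurableSet_Ioc]
    apply ae_of_all
    intro s hs
    have hds : 0 < d + s := by linarith [hs.1]
    have hind : ∀ x : ℝ, (Set.Ici (lam-x)).indicator φ s
        = (Set.Ici (lam-s)).indicator (fun _ => φ s) x := by
      intro x
      simp only [Set.indicator_apply, Set.mem_Ici]
      exact if_congr ⟨fun h => by linarith, fun h => by linarith⟩ rfl rfl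
    have hset : Set.Ici (lam - s) ∩ A = Set.Icc (lam - s) lam := by
      ext x
      simp only [hA, Set.mem_inter_iff, Set.mem_Ici, Set.mem_Icc]
      constructor
      · rintro ⟨h1, h2, h3⟩; exact ⟨h1, h3⟩
      · rintro ⟨h1, h2⟩; exact ⟨h1, by linarith [hs.2], h2⟩
    calc (∫⁻ x in A, (Set.Ici (lam-x)).indicator φ s ∂μ)
        = ∫⁻ x in A, (Set.Ici (lam-s)).indicator (fun _ => φ s) x ∂μ :=
          lintegral_congr fun x => hind x
      _ = φ s * μ (Set.Icc (lam - s) lam) := by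
          rw [lintegral_indicator measurableSet_Ici,
            Measure.restrict_restrict measurableSet_Ici, hset, setLIntegral_const]
      _ ≤ φ s * ENNReal.ofReal (2*C/3 * s ^ ((3:ℝ)/2)) :=
          mul_le_mul_right (hmass s hs.1.le hs.2) _
      _ ≤ ENNReal.ofReal (2*C*a/3) * ENNReal.ofReal ((d+s) ^ ((1:ℝ)/2 - a)) := by
          rw [hφ, ← ENNReal.ofReal_mul (by positivity), ← ENNReal.ofReal_mul (by positivity)]
          apply ENNReal.ofReal_le_ofReal
          have h1 : s ^ ((3:ℝ)/2) ≤ (d+s) ^ ((3:ℝ)/2) :=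
            Real.rpow_le_rpow hs.1.le (by linarith) (by norm_num)
          have h2 : (d+s)^(-(a+1)) * (d+s)^((3:ℝ)/2) = (d+s)^((1:ℝ)/2 - a) := by
            rw [← Real.rpow_add hds]
            congr 1
            ring
          have hnn : (0:ℝ) ≤ (d+s)^(-(a+1)) := Real.rpow_nonneg hds.le _
          calc a * (d+s)^(-(a+1)) * (2*C/3 * s^((3:ℝ)/2))
              ≤ a * (d+s)^(-(a+1)) * (2*C/3 * (d+s)^((3:ℝ)/2)) := by
                apply mul_le_mul_of_nonneg_left
                  (mul_le_mul_of_nonneg_left h1 (by positivity)) (by positivity)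
            _ = 2*C*a/3 * ((d+s)^(-(a+1)) * (d+s)^((3:ℝ)/2)) := by ring
            _ = 2*C*a/3 * (d+s)^((1:ℝ)/2 - a) := by rw [h2]
  have htail : (∫⁻ s in Set.Ioc 0 δ, ENNReal.ofReal ((d+s) ^ ((1:ℝ)/2 - a)))
      = ENNReal.ofReal (∫ s in (0:ℝ)..δ, (d+s)^((1:ℝ)/2-a)) := by
    rw [intervalIntegral.integral_of_le hδ.le,
      ofReal_integral_eq_lintegral_ofReal (aux_int d _ 0 δ hd le_rfl hδ.le) ?_]
    filter_upwards [ae_restrict_mem measurableSet_Ioc] with x hx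
    have : 0 < d + x := by nlinarith [hx.1]
    positivity
  have htail2 : (∫ s in (0:ℝ)..δ, (d+s)^((1:ℝ)/2-a)) ≤ 2 * d ^ ((3:ℝ)/2 - a) := by
    rw [aux_ftc d ((1:ℝ)/2 - a) 0 δ hd le_rfl hδ.le (by intro h; linarith)]
    have he : (1:ℝ)/2 - a + 1 = 3/2 - a := by ring
    rw [he, add_zero]
    have hu : 0 ≤ d ^ ((3:ℝ)/2 - a) := Real.rpow_nonneg hd.le _
    have hv : 0 ≤ (d+δ) ^ ((3:ℝ)/2 - a) := Real.rpow_nonneg (by linarith) _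
    rw [div_le_iff_of_neg (by linarith : (3:ℝ)/2 - a < 0)]
    nlinarith
  -- assemble near field
  have hXnn : (0:ℝ) ≤ d ^ ((3:ℝ)/2 - a) := Real.rpow_nonneg hd.le _
  have hbdry : ENNReal.ofReal ((d+δ)^(-a)) * μ A
      ≤ ENNReal.ofReal (2*C/3 * d ^ ((3:ℝ)/2 - a)) := by
    calc ENNReal.ofReal ((d+δ)^(-a)) * μ A
        ≤ ENNReal.ofReal ((d+δ)^(-a)) * ENNReal.ofReal (2*C/3 * δ ^ ((3:ℝ)/2)) :=
          mul_le_mul_right (hmass δ hδ.le le_rfl) _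
      _ = ENNReal.ofReal ((d+δ)^(-a) * (2*C/3 * δ ^ ((3:ℝ)/2))) :=
          (ENNReal.ofReal_mul (Real.rpow_nonneg (by linarith) _)).symm
      _ ≤ ENNReal.ofReal (2*C/3 * d ^ ((3:ℝ)/2 - a)) := by
          apply ENNReal.ofReal_le_ofReal
          have k1 : δ ^ ((3:ℝ)/2) ≤ (d+δ) ^ ((3:ℝ)/2) :=
            Real.rpow_le_rpow hδ.le (by linarith) (by norm_num)
          have k2 : (d+δ)^(-a) * (d+δ)^((3:ℝ)/2) = (d+δ)^((3:ℝ)/2-a) := by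
            rw [← Real.rpow_add (by linarith)]
            congr 1
            ring
          have k3 : (d+δ)^((3:ℝ)/2-a) ≤ d^((3:ℝ)/2-a) :=
            Real.rpow_le_rpow_of_nonpos hd (by linarith) (by linarith)
          have hnn2 : (0:ℝ) ≤ (d+δ)^(-a) := Real.rpow_nonneg (by linarith) _
          calc (d+δ)^(-a) * (2*C/3 * δ ^ ((3:ℝ)/2))
              = 2*C/3 * ((d+δ)^(-a) * δ^((3:ℝ)/2)) := by ring
            _ ≤ 2*C/3 * ((d+δ)^(-a) * (d+δ)^((3:ℝ)/2)) := by
                apply mul_le_mul_of_nonneg_left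
                  (mul_le_mul_of_nonneg_left k1 hnn2) (by positivity)
            _ = 2*C/3 * (d+δ)^((3:ℝ)/2-a) := by rw [k2]
            _ ≤ 2*C/3 * d^((3:ℝ)/2-a) := mul_le_mul_of_nonneg_left k3 (by positivity)
  have hnear_total : (∫⁻ x in A, ENNReal.ofReal (f x) ∂μ)
      ≤ ENNReal.ofReal (2^a * (2*C/3 * d ^ ((3:ℝ)/2 - a) + 2*C*a/3 * (2 * d ^ ((3:ℝ)/2 - a)))) := by
    calc (∫⁻ x in A, ENNReal.ofReal (f x) ∂μ)
        ≤ ENNReal.ofReal ((2:ℝ)^a) * ∫⁻ x in A, ENNReal.ofReal ((d + (lam - x))^(-a)) ∂μ :=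
          hnear1
      _ ≤ ENNReal.ofReal ((2:ℝ)^a) * (ENNReal.ofReal (2*C/3 * d ^ ((3:ℝ)/2 - a)) +
            ENNReal.ofReal (2*C*a/3 * (2 * d ^ ((3:ℝ)/2 - a)))) := by
          apply mul_le_mul_right
          rw [hnear2, hswap]
          apply add_le_add hbdry
          calc (∫⁻ s in Set.Ioc 0 δ, (∫⁻ x in A, (Set.Ici (lam-x)).indicator φ s ∂μ))
              ≤ ∫⁻ s in Set.Ioc 0 δ,
                  ENNReal.ofReal (2*C*a/3) * ENNReal.ofReal ((d+s) ^ ((1:ℝ)/2 - a)) := hswap_le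
            _ = ENNReal.ofReal (2*C*a/3) *
                  ∫⁻ s in Set.Ioc 0 δ, ENNReal.ofReal ((d+s) ^ ((1:ℝ)/2 - a)) :=
                lintegral_const_mul' _ _ ENNReal.ofReal_ne_top
            _ ≤ ENNReal.ofReal (2*C*a/3) * ENNReal.ofReal (2 * d ^ ((3:ℝ)/2 - a)) := by
                rw [htail]
                exact mul_le_mul_right (ENNReal.ofReal_le_ofReal htail2) _
            _ = ENNReal.ofReal (2*C*a/3 * (2 * d ^ ((3:ℝ)/2 - a))) :=
                (ENNReal.ofReal_mul (by positivity)).symm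
      _ = ENNReal.ofReal (2^a * (2*C/3 * d ^ ((3:ℝ)/2 - a) + 2*C*a/3 * (2 * d ^ ((3:ℝ)/2 - a)))) := by
          rw [← ENNReal.ofReal_add (by positivity) (by positivity),
            ← ENNReal.ofReal_mul (by positivity)]
  -- far field refined
  have hfar2 : ENNReal.ofReal (δ^(-a))
      ≤ ENNReal.ofReal (δ^(-a) * (δ/2 + 1)^(a - 3/2) * d ^ ((3:ℝ)/2 - a)) := by
    apply ENNReal.ofReal_le_ofReal
    have hp : (0:ℝ) < δ/2 + 1 := by linarith
    have hq : (δ/2+1)^((3:ℝ)/2-a) ≤ d^((3:ℝ)/2-a) :=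
      Real.rpow_le_rpow_of_nonpos hd hd1 (by linarith)
    have hone : (δ/2+1)^(a-3/2) * (δ/2+1)^((3:ℝ)/2-a) = 1 := by
      rw [← Real.rpow_add hp, show (a-3/2)+((3:ℝ)/2-a) = 0 by ring, Real.rpow_zero]
    have h1le : (1:ℝ) ≤ (δ/2+1)^(a-3/2) * d^((3:ℝ)/2-a) := by
      calc (1:ℝ) = (δ/2+1)^(a-3/2) * (δ/2+1)^((3:ℝ)/2-a) := hone.symm
        _ ≤ (δ/2+1)^(a-3/2) * d^((3:ℝ)/2-a) :=
            mul_le_mul_of_nonneg_left hq (Real.rpow_nonneg hp.le _)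
    have hδa : (0:ℝ) ≤ δ^(-a) := Real.rpow_nonneg hδ.le _
    calc δ^(-a) = δ^(-a) * 1 := (mul_one _).symm
      _ ≤ δ^(-a) * ((δ/2+1)^(a-3/2) * d^((3:ℝ)/2-a)) := mul_le_mul_of_nonneg_left h1le hδa
      _ = δ^(-a) * (δ/2 + 1)^(a - 3/2) * d ^ ((3:ℝ)/2 - a) := by ring
  calc (∫⁻ x, ENNReal.ofReal (f x) ∂μ)
      = (∫⁻ x in A, ENNReal.ofReal (f x) ∂μ) + ∫⁻ x in Aᶜ, ENNReal.ofReal (f x) ∂μ := hsplit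
    _ ≤ ENNReal.ofReal (2^a * (2*C/3 * d ^ ((3:ℝ)/2 - a) + 2*C*a/3 * (2 * d ^ ((3:ℝ)/2 - a))))
        + ENNReal.ofReal (δ^(-a) * (δ/2 + 1)^(a - 3/2) * d ^ ((3:ℝ)/2 - a)) :=
        add_le_add hnear_total (hfar.trans hfar2)
    _ = ENNReal.ofReal (C' * d ^ ((3:ℝ)/2 - a)) := by
        rw [← ENNReal.ofReal_add (by positivity) (by positivity), hC'def]
        congr 1
        ring
end

section
/- Let μ be a probability measure on ℝ supported in [0, d₁] with d₁ > 0, let m₀(ζ) = ∫(x − ζ)⁻¹ dμ(x), fix t > 0 and 0 < c_n ≤ 1, and define Φ(ζ) = ζ·(1 − c_n·t·m₀(ζ))² + (1 − c_n)·t·(1 − c_n·t·m₀(ζ)) for real ζ > d₁, and F(z, ζ) = 1 + (t(1−c_n) − √(t²(1−c_n)² + 4ζz))/(2ζ) − c_n·t·m₀(ζ) for z, ζ > 0 (real square root). Suppose ζ₊ > d₁ is a critical point of Φ, i.e. Φ'(ζ₊) = 0, and set a₊ = Φ(ζ₊). If a₊ > 0, ζ₊ > 0, and t²(1−c_n)²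 + 4ζ₊a₊ ≥ 0, and if F(a₊, ζ₊) = 0, then also ∂F/∂ζ(a₊, ζ₊) = 0. -/
open MeasureTheory

open Metric in
lemma m_hasDeriv (μ : Measure ℝ) [IsProbabilityMeasure μ] (d1 : ℝ) (hd1 : 0 < d1)
    (hs0 : μ (Set.Iio 0) = 0) (hs1 : μ (Set.Ioi d1) = 0) (ζp : ℝ) (hζ : d1 < ζp) :
    HasDerivAt (fun ζ : ℝ => ∫ x, (x - ζ)⁻¹ ∂μ) (∫ x, ((x - ζp) ^ 2)⁻¹ ∂μ) ζp := by
  have hae : ∀ᵐ x ∂μ, x ∈ Set.Icc 0 d1 := by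
    rw [ae_iff]
    refine measure_mono_null ?_ (measure_union_null hs0 hs1)
    intro x hx
    simp only [Set.mem_setOf_eq, Set.mem_Icc, not_and_or, not_le] at hx
    rcases hx with h | h
    · exact Or.inl h
    · exact Or.inr h
  set ε : ℝ := (ζp - d1) / 2 with hε_def
  have hε : 0 < ε := by simp only [hε_def]; linarith
  have key : ∀ x ∈ Set.Icc 0 d1, ∀ ζ ∈ ball ζp ε, ε ≤ ζ - x := by
    intro x hx ζ hζ'
    rw [mem_ball, Real.dist_eq, abs_lt] at hζ'
    have := hx.2
    simp only [hε_def] at *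
    linarith [hζ'.1]
  have h := hasDerivAt_integral_of_dominated_loc_of_deriv_le (μ := μ)
      (F := fun ζ x => (x - ζ)⁻¹) (F' := fun ζ x => ((x - ζ) ^ 2)⁻¹)
      (x₀ := ζp) (bound := fun _ => (ε ^ 2)⁻¹) (ball_mem_nhds ζp hε)
      (Filter.Eventually.of_forall fun ζ =>
        ((measurable_id.sub_const ζ).inv).aestronglyMeasurable)
      ?_ (((measurable_id.sub_const ζp).pow_const 2).inv).aestronglyMeasurable ?_
      (integrable_const _) ?_
  · exact h.2
  · -- integrability of F ζp
    refine (integrable_const ((ζp - d1)⁻¹)).mono'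
      ((measurable_id.sub_const ζp).inv).aestronglyMeasurable ?_
    filter_upwards [hae] with x hx
    have h1 : 0 < ζp - x := by linarith [hx.2]
    have h2 : ζp - d1 ≤ ζp - x := by linarith [hx.2]
    rw [Real.norm_eq_abs, abs_inv, abs_sub_comm, abs_of_pos h1]
    exact inv_anti₀ (by linarith) h2
  · -- bound
    filter_upwards [hae] with x hx
    intro ζ hζ'
    have h1 := key x hx ζ hζ'
    have h2 : ε ^ 2 ≤ (x - ζ) ^ 2 := by nlinarith
    rw [Real.norm_eq_abs, abs_of_pos (inv_pos.2 (by nlinarith : (0:ℝ) < (x - ζ)^2))]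
    exact inv_anti₀ (by positivity) h2
  · -- differentiability
    filter_upwards [hae] with x hx
    intro ζ hζ'
    have h1 := key x hx ζ hζ'
    have hne : x - ζ ≠ 0 := by intro h; rw [sub_eq_zero] at h; subst h; linarith
    have := ((hasDerivAt_id ζ).const_sub x).inv hne
    refine this.congr_deriv ?_
    norm_num

/-- At a critical point `ζ₊ > d₁` of the inverse subordination function
`Φ(ζ) = ζ(1 - cₙ t m₀(ζ))² + (1-cₙ) t (1 - cₙ t m₀(ζ))` with value `a₊ = Φ(ζ₊) > 0`, if
`F(a₊, ζ₊) = 0` (with `F(z,ζ) = 1 + (t(1-cₙ) - √(t²(1-cₙ)² + 4ζz))/(2ζ) - cₙ t m₀(ζ)` and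
nonnegative discriminant), then also `∂F/∂ζ (a₊, ζ₊) = 0`. -/
theorem stmt_9 (μ : Measure ℝ) [IsProbabilityMeasure μ] (d1 : ℝ) (hd1 : 0 < d1)
    (hs0 : μ (Set.Iio 0) = 0) (hs1 : μ (Set.Ioi d1) = 0)
    (t cn : ℝ) (ht : 0 < t) (hcn0 : 0 < cn) (hcn1 : cn ≤ 1)
    (ζp : ℝ) (hζ : d1 < ζp)
    (hcrit : deriv (fun ζ : ℝ =>
        ζ * (1 - cn * t * ∫ x, (x - ζ)⁻¹ ∂μ) ^ 2
          + (1 - cn) * t * (1 - cn * t * ∫ x, (x - ζ)⁻¹ ∂μ)) ζp = 0)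
    (ap : ℝ)
    (hap : ap = ζp * (1 - cn * t * ∫ x, (x - ζp)⁻¹ ∂μ) ^ 2
          + (1 - cn) * t * (1 - cn * t * ∫ x, (x - ζp)⁻¹ ∂μ))
    (hap0 : 0 < ap) (hζp0 : 0 < ζp)
    (hdisc : 0 ≤ t ^ 2 * (1 - cn) ^ 2 + 4 * ζp * ap)
    (hF : 1 + (t * (1 - cn) - Real.sqrt (t ^ 2 * (1 - cn) ^ 2 + 4 * ζp * ap)) / (2 * ζp)
        - cn * t * ∫ x, (x - ζp)⁻¹ ∂μ = 0) :
    deriv (fun ζ : ℝ =>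
        1 + (t * (1 - cn) - Real.sqrt (t ^ 2 * (1 - cn) ^ 2 + 4 * ζ * ap)) / (2 * ζ)
          - cn * t * ∫ x, (x - ζ)⁻¹ ∂μ) ζp = 0 := by
  have hM := m_hasDeriv μ d1 hd1 hs0 hs1 ζp hζ
  set M : ℝ := ∫ x, ((x - ζp) ^ 2)⁻¹ ∂μ with hM_def
  set m0 : ℝ := ∫ x, (x - ζp)⁻¹ ∂μ with hm0_def
  set b : ℝ := 1 - cn * t * m0 with hb_def
  -- derivative of b-part
  have hb : HasDerivAt (fun ζ : ℝ => 1 - cn * t * ∫ x, (x - ζ)⁻¹ ∂μ)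
      (-(cn * t * M)) ζp := ((hM.const_mul (cn * t)).const_sub 1).congr_deriv (by ring)
  -- Φ derivative
  have hΦ : HasDerivAt (fun ζ : ℝ =>
      ζ * (1 - cn * t * ∫ x, (x - ζ)⁻¹ ∂μ) ^ 2
        + (1 - cn) * t * (1 - cn * t * ∫ x, (x - ζ)⁻¹ ∂μ))
      (b ^ 2 + ζp * (2 * b * (-(cn * t * M))) + (1 - cn) * t * (-(cn * t * M))) ζp := by
    have h1 := (hasDerivAt_id ζp).mul (hb.pow 2)
    have h2 := hb.const_mul ((1 - cn) * t)
    exact (h1.add h2).congr_deriv (by simp only [hb_def, hm0_def, id_eq, Pi.pow_apply]; push_cast; ring)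
  rw [hΦ.deriv] at hcrit
  -- discriminant positive
  have hD0 : 0 < t ^ 2 * (1 - cn) ^ 2 + 4 * ζp * ap := by nlinarith
  set s : ℝ := Real.sqrt (t ^ 2 * (1 - cn) ^ 2 + 4 * ζp * ap) with hs_def
  have hs_pos : 0 < s := Real.sqrt_pos.2 hD0
  -- derivative of G
  have hD : HasDerivAt (fun ζ : ℝ => t ^ 2 * (1 - cn) ^ 2 + 4 * ζ * ap) (4 * ap) ζp :=
    ((((hasDerivAt_id ζp).const_mul 4).mul_const ap).const_add
      (t ^ 2 * (1 - cn) ^ 2)).congr_deriv (by ring)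
  have hsqrt : HasDerivAt (fun ζ : ℝ => Real.sqrt (t ^ 2 * (1 - cn) ^ 2 + 4 * ζ * ap))
      (1 / (2 * s) * (4 * ap)) ζp :=
    (Real.hasDerivAt_sqrt (ne_of_gt hD0)).comp ζp hD
  have hnum : HasDerivAt (fun ζ : ℝ =>
      t * (1 - cn) - Real.sqrt (t ^ 2 * (1 - cn) ^ 2 + 4 * ζ * ap))
      (-(1 / (2 * s) * (4 * ap))) ζp := hsqrt.const_sub _
  have hden : HasDerivAt (fun ζ : ℝ => 2 * ζ) 2 ζp :=
    ((hasDerivAt_id ζp).const_mul 2).congr_deriv (by ring)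
  have hquot : HasDerivAt (fun ζ : ℝ =>
      (t * (1 - cn) - Real.sqrt (t ^ 2 * (1 - cn) ^ 2 + 4 * ζ * ap)) / (2 * ζ))
      ((-(1 / (2 * s) * (4 * ap)) * (2 * ζp) - (t * (1 - cn) - s) * 2) / (2 * ζp) ^ 2) ζp :=
    hnum.div hden (by positivity)
  have hG : HasDerivAt (fun ζ : ℝ =>
      1 + (t * (1 - cn) - Real.sqrt (t ^ 2 * (1 - cn) ^ 2 + 4 * ζ * ap)) / (2 * ζ)
        - cn * t * ∫ x, (x - ζ)⁻¹ ∂μ)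
      ((-(1 / (2 * s) * (4 * ap)) * (2 * ζp) - (t * (1 - cn) - s) * 2) / (2 * ζp) ^ 2
        - cn * t * M) ζp :=
    (hquot.const_add 1).sub (hM.const_mul (cn * t))
  rw [hG.deriv]
  -- algebra
  set K : ℝ := cn * t * M with hK_def
  have hs_eq : s = t * (1 - cn) + 2 * ζp * b := by
    have h2ζ : (2 : ℝ) * ζp ≠ 0 := by positivity
    field_simp at hF
    simp only [hb_def]
    linear_combination -hF
  have hKs : K * s = b ^ 2 := by
    rw [hs_eq]
    linear_combination -hcrit
  have ha' : ap = ζp * b ^ 2 + t * (1 - cn) * b := by rw [hap]; ring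
  have hζne : ζp ≠ 0 := ne_of_gt hζp0
  have hsne : s ≠ 0 := ne_of_gt hs_pos
  field_simp
  linear_combination (-4 * ζp ^ 2) * hKs + (-4 * ζp) * ha' + (2 * s + 4 * ζp * b) * hs_eq + (4 * ζp ^ 2 * s) * hK_def
end

section
/- Let ρ be a probability density on ℝ supported in (−∞, λ₊] satisfying c√(λ₊−x) ≤ ρ(x) ≤ C√(λ₊−x) for x ∈ [λ₊ − δ, λ₊] (constants c, C, δ > 0). For 1 ≤ j ≤ n, define the classical location γ_j = sup{ x : ∫_x^∞ ρ > (j−1)/n }. Then γ₁ = λ₊, and there are constants c', C' > 0 so that for all j ≥ 2 with γ_j ≥ λ₊ − δ/2, one has c'·(j/n)^{2/3} ≤ λ₊ − γ_j ≤ C'·(j/n)^{2/3}. -/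
open MeasureTheory

set_option maxHeartbeats 2000000 in
/-- For a probability density `ρ` supported in `(-∞, λ₊]` with square-root
behavior `ρ(x) ≍ √(λ₊ - x)` on `[λ₊ - δ, λ₊]`, the classical locations
`γ_j = sup{x : ∫_x^∞ ρ > (j-1)/n}` satisfy `γ₁ = λ₊` and
`λ₊ - γ_j ≍ (j/n)^{2/3}` for `j ≥ 2` with `γ_j ≥ λ₊ - δ/2`. -/
theorem stmt_14 (ρ : ℝ → ℝ) (lam : ℝ) (c C δ : ℝ) (n : ℕ)
    (hn : 1 ≤ n) (hc : 0 < c) (hcC : c ≤ C) (hδ : 0 < δ)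
    (hmeas : Measurable ρ) (hnonneg : ∀ x, 0 ≤ ρ x)
    (hint : Integrable ρ) (hprob : ∫ x, ρ x = 1)
    (hsupp : ∀ x, lam < x → ρ x = 0)
    (hlow : ∀ x ∈ Set.Icc (lam - δ) lam, c * Real.sqrt (lam - x) ≤ ρ x)
    (hupp : ∀ x ∈ Set.Icc (lam - δ) lam, ρ x ≤ C * Real.sqrt (lam - x)) :
    sSup {x : ℝ | ((1 : ℝ) - 1) / n < ∫ y in Set.Ioi x, ρ y} = lam ∧
    ∃ c' C' : ℝ, 0 < c' ∧ 0 < C' ∧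
      ∀ j : ℕ, 2 ≤ j → j ≤ n →
        lam - δ / 2 ≤ sSup {x : ℝ | ((j : ℝ) - 1) / n < ∫ y in Set.Ioi x, ρ y} →
          c' * ((j : ℝ) / n) ^ ((2 : ℝ) / 3) ≤
              lam - sSup {x : ℝ | ((j : ℝ) - 1) / n < ∫ y in Set.Ioi x, ρ y} ∧
          lam - sSup {x : ℝ | ((j : ℝ) - 1) / n < ∫ y in Set.Ioi x, ρ y} ≤
              C' * ((j : ℝ) / n) ^ ((2 : ℝ) / 3) := by
  have hn0 : (0:ℝ) < n := by exact_mod_cast hn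
  have hC0 : 0 < C := lt_of_lt_of_le hc hcC
  set F : ℝ → ℝ := fun x => ∫ y in Set.Ioi x, ρ y with hFdef
  have hFx : ∀ x : ℝ, (∫ y in Set.Ioi x, ρ y) = F x := fun x => rfl
  simp only [hFx]
  -- basic properties of F
  have hFanti : Antitone F := by
    intro x y hxy
    exact setIntegral_mono_set hint.integrableOn (Filter.Eventually.of_forall hnonneg)
      ((Set.Ioi_subset_Ioi hxy).eventuallyLE)
  have hFzero : ∀ x, lam ≤ x → F x = 0 := by
    intro x hx
    have h0 : ∀ y ∈ Set.Ioi x, ρ y = 0 := fun y hy => hsupp y (lt_of_le_of_lt hx hy)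
    calc F x = ∫ y in Set.Ioi x, (0:ℝ) := setIntegral_congr_fun measurableSet_Ioi h0
    _ = 0 := by simp
  have hFsplit : ∀ t, t ≤ lam → F t = ∫ y in Set.Ioc t lam, ρ y := by
    intro t ht
    have hu : Set.Ioc t lam ∪ Set.Ioi lam = Set.Ioi t := Set.Ioc_union_Ioi_eq_Ioi ht
    have h2 : (∫ y in Set.Ioi lam, ρ y) = 0 := hFzero lam le_rfl
    have h3 := setIntegral_union (μ := volume) (f := ρ) (s := Set.Ioc t lam)
      (t := Set.Ioi lam) (Set.Ioc_disjoint_Ioi (le_refl lam))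
      measurableSet_Ioi hint.integrableOn hint.integrableOn
    calc F t = ∫ y in Set.Ioc t lam ∪ Set.Ioi lam, ρ y := by rw [hu]
    _ = (∫ y in Set.Ioc t lam, ρ y) + ∫ y in Set.Ioi lam, ρ y := h3
    _ = ∫ y in Set.Ioc t lam, ρ y := by rw [h2, add_zero]
  -- upper bound on F near the edge
  have hUp : ∀ t ∈ Set.Icc (lam - δ) lam, F t ≤ C * (Real.sqrt (lam - t) * (lam - t)) := by
    intro t ht
    obtain ⟨ht1, ht2⟩ := ht
    have hmono : ∀ x ∈ Set.Ioc t lam, ρ x ≤ C * Real.sqrt (lam - t) := by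
      intro x hx
      have hx1 : lam - δ ≤ x := le_trans ht1 hx.1.le
      refine (hupp x ⟨hx1, hx.2⟩).trans ?_
      have hsq : Real.sqrt (lam - x) ≤ Real.sqrt (lam - t) :=
        Real.sqrt_le_sqrt (by linarith [hx.1])
      nlinarith [Real.sqrt_nonneg (lam - x)]
    have hint2 : IntegrableOn (fun _ => C * Real.sqrt (lam - t)) (Set.Ioc t lam) volume :=
      integrableOn_const measure_Ioc_lt_top.ne
    calc F t = ∫ y in Set.Ioc t lam, ρ y := hFsplit t ht2
    _ ≤ ∫ _y in Set.Ioc t lam, C * Real.sqrt (lam - t) :=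
        setIntegral_mono_on hint.integrableOn hint2 measurableSet_Ioc hmono
    _ = (lam - t) * (C * Real.sqrt (lam - t)) := by
        rw [setIntegral_const, measureReal_def, Real.volume_Ioc, ENNReal.toReal_ofReal (by linarith),
          smul_eq_mul]
    _ = C * (Real.sqrt (lam - t) * (lam - t)) := by ring
  -- lower bound on F near the edge
  have hLow : ∀ t ∈ Set.Icc (lam - δ) lam,
      c / 4 * (Real.sqrt (lam - t) * (lam - t)) ≤ F t := by
    intro t ht
    obtain ⟨ht1, ht2⟩ := ht
    set m := (t + lam) / 2 with hm
    have htm : t ≤ m := by rw [hm]; linarith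
    have hml : m ≤ lam := by rw [hm]; linarith
    have hkey : ∀ x ∈ Set.Ioc t m, c * Real.sqrt (lam - m) ≤ ρ x := by
      intro x hx
      have hx2 : x ≤ lam := hx.2.trans hml
      refine le_trans ?_ (hlow x ⟨le_trans ht1 hx.1.le, hx2⟩)
      have hsq : Real.sqrt (lam - m) ≤ Real.sqrt (lam - x) :=
        Real.sqrt_le_sqrt (by linarith [hx.2])
      nlinarith [Real.sqrt_nonneg (lam - m)]
    have hconst : IntegrableOn (fun _ => c * Real.sqrt (lam - m)) (Set.Ioc t m) volume :=
      integrableOn_const measure_Ioc_lt_top.ne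
    have step1 : (m - t) * (c * Real.sqrt (lam - m)) ≤ ∫ y in Set.Ioc t m, ρ y := by
      have h := setIntegral_mono_on hconst hint.integrableOn measurableSet_Ioc hkey
      rwa [setIntegral_const, measureReal_def, Real.volume_Ioc, ENNReal.toReal_ofReal (by linarith),
        smul_eq_mul] at h
    have step2 : (∫ y in Set.Ioc t m, ρ y) ≤ F t := by
      rw [hFsplit t ht2]
      exact setIntegral_mono_set hint.integrableOn (Filter.Eventually.of_forall hnonneg)
        ((Set.Ioc_subset_Ioc_right hml).eventuallyLE)
    refine le_trans ?_ (step1.trans step2)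
    have h1 : m - t = (lam - t) / 2 := by rw [hm]; ring
    have h2 : lam - m = (lam - t) / 2 := by rw [hm]; ring
    rw [h1, h2]
    have hs : 0 ≤ lam - t := by linarith
    have hsq : Real.sqrt (lam - t) ≤ 2 * Real.sqrt ((lam - t) / 2) := by
      have h4 : (2:ℝ) * Real.sqrt ((lam - t) / 2) = Real.sqrt (2 ^ 2 * ((lam - t) / 2)) := by
        rw [Real.sqrt_mul (by positivity), Real.sqrt_sq (by norm_num : (0:ℝ) ≤ 2)]
      rw [h4]
      exact Real.sqrt_le_sqrt (by linarith)
    nlinarith [mul_le_mul_of_nonneg_left hsq (by positivity : (0:ℝ) ≤ c / 4 * (lam - t))]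
  -- part 1
  have part1 : sSup {x : ℝ | ((1:ℝ) - 1) / n < F x} = lam := by
    have hset : {x : ℝ | ((1:ℝ) - 1) / n < F x} = {x : ℝ | 0 < F x} := by
      ext x; norm_num
    rw [hset]
    have hsub1 : Set.Iio lam ⊆ {x : ℝ | 0 < F x} := by
      intro x hx
      have hxl : x < lam := hx
      set t := max x (lam - δ) with htdef
      have ht1 : lam - δ ≤ t := le_max_right _ _
      have htl : t < lam := max_lt hxl (by linarith)
      have hsqpos : 0 < Real.sqrt (lam - t) := Real.sqrt_pos.2 (by linarith)
      have hpos : 0 < c / 4 * (Real.sqrt (lam - t) * (lam - t)) := by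
        have h0 : 0 < lam - t := by linarith
        positivity
      have hFt := hLow t ⟨ht1, htl.le⟩
      have hFxt : F t ≤ F x := hFanti (le_max_left _ _)
      exact lt_of_lt_of_le (lt_of_lt_of_le hpos hFt) hFxt
    have hsub2 : {x : ℝ | 0 < F x} ⊆ Set.Iic lam := by
      intro x hx
      by_contra h
      simp only [Set.mem_Iic, not_le] at h
      have h0 := hFzero x h.le
      have : (0:ℝ) < F x := hx
      rw [h0] at this; exact lt_irrefl _ this
    refine le_antisymm (csSup_le ⟨lam - 1, hsub1 (by norm_num : lam - 1 < lam)⟩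
      fun x hx => hsub2 hx) ?_
    refine le_of_forall_lt fun w hw => ?_
    have hmem : (w + lam) / 2 ∈ {x : ℝ | 0 < F x} := hsub1 (by simp; linarith)
    exact lt_of_lt_of_le (by linarith) (le_csSup ⟨lam, hsub2⟩ hmem)
  refine ⟨part1, (1 / (2 * C)) ^ ((2:ℝ)/3), (4 / c) ^ ((2:ℝ)/3),
    Real.rpow_pos_of_pos (by positivity) _, Real.rpow_pos_of_pos (by positivity) _, ?_⟩
  intro j hj2 hjn hγge
  have hj2' : (2:ℝ) ≤ (j:ℝ) := by exact_mod_cast hj2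
  have hjn' : (j:ℝ) ≤ (n:ℝ) := by exact_mod_cast hjn
  set a := ((j:ℝ) - 1) / (n:ℝ) with hadef
  set S := {x : ℝ | a < F x} with hSdef
  set γ := sSup S with hγdef
  have ha0 : 0 < a := by rw [hadef]; apply div_pos (by linarith) hn0
  have ha1 : a < 1 := by rw [hadef, div_lt_one hn0]; linarith
  have hS_ub : ∀ x ∈ S, x ≤ lam := by
    intro x hx
    by_contra h
    push_neg at h
    have h0 := hFzero x h.le
    have hax : a < F x := hx
    rw [h0] at hax; linarith
  have hbdd : BddAbove S := ⟨lam, hS_ub⟩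
  have hS_ne : S.Nonempty := by
    have hU : ⋃ k : ℕ, Set.Ioi (-(k:ℝ)) = Set.univ := by
      ext x
      simp only [Set.mem_iUnion, Set.mem_Ioi, Set.mem_univ, iff_true]
      obtain ⟨k, hk⟩ := exists_nat_gt (-x)
      exact ⟨k, by linarith⟩
    have htend := tendsto_setIntegral_of_monotone (μ := volume) (f := ρ)
      (s := fun k : ℕ => Set.Ioi (-(k:ℝ))) (fun _ => measurableSet_Ioi)
      (fun i j hij => Set.Ioi_subset_Ioi (neg_le_neg (by exact_mod_cast hij)))
      (by rw [hU]; exact hint.integrableOn)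
    rw [hU, MeasureTheory.setIntegral_univ, hprob] at htend
    have htend2 : Filter.Tendsto (fun k : ℕ => F (-(k:ℝ))) Filter.atTop (nhds 1) := htend
    obtain ⟨k, hk⟩ := (htend2.eventually (eventually_gt_nhds ha1)).exists
    exact ⟨-(k:ℝ), hk⟩
  have hγlam : γ ≤ lam := csSup_le hS_ne hS_ub
  have hγge' : lam - δ / 2 ≤ γ := hγge
  -- lower bound: K ≤ lam - γ
  set K := (a / C) ^ ((2:ℝ)/3) with hK
  have hK0 : 0 < K := Real.rpow_pos_of_pos (div_pos ha0 hC0) _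
  have hK32 : C * (Real.sqrt K * K) = a := by
    have e1 : Real.sqrt K * K = K ^ ((3:ℝ)/2) := by
      rw [show (3:ℝ)/2 = 1/2 + 1 by norm_num, Real.rpow_add hK0, Real.rpow_one,
        Real.sqrt_eq_rpow]
    have e2 : K ^ ((3:ℝ)/2) = a / C := by
      rw [hK, ← Real.rpow_mul (le_of_lt (div_pos ha0 hC0)),
        show (2:ℝ)/3 * (3/2) = 1 by norm_num, Real.rpow_one]
    rw [e1, e2]
    field_simp
  have hub2 : ∀ x ∈ S, x ≤ max (lam - δ) (lam - K) := by
    intro x hx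
    by_contra h
    push_neg at h
    rw [max_lt_iff] at h
    obtain ⟨h1, h2⟩ := h
    have hxl : x ≤ lam := hS_ub x hx
    have hFxu := hUp x ⟨h1.le, hxl⟩
    have haFx : a < F x := hx
    have hsx : 0 ≤ lam - x := by linarith
    have hxK : lam - x < K := by linarith
    have h32 : Real.sqrt (lam - x) * (lam - x) < Real.sqrt K * K := by
      nlinarith [Real.sqrt_lt_sqrt hsx hxK, Real.sqrt_nonneg (lam - x),
        Real.sqrt_pos.2 hK0, Real.sqrt_nonneg K]
    nlinarith [mul_lt_mul_of_pos_left h32 hC0]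
  have hKle : K ≤ lam - γ := by
    have hγmax : γ ≤ max (lam - δ) (lam - K) := csSup_le hS_ne hub2
    rcases le_total (lam - δ) (lam - K) with h | h
    · rw [max_eq_right h] at hγmax; linarith
    · rw [max_eq_left h] at hγmax; linarith
  -- upper bound: lam - γ ≤ M
  set M := (4 * a / c) ^ ((2:ℝ)/3) with hM
  have hM0 : 0 < M := Real.rpow_pos_of_pos (by positivity) _
  have hM32 : c / 4 * (Real.sqrt M * M) = a := by
    have e1 : Real.sqrt M * M = M ^ ((3:ℝ)/2) := by
      rw [show (3:ℝ)/2 = 1/2 + 1 by norm_num, Real.rpow_add hM0, Real.rpow_one,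
        Real.sqrt_eq_rpow]
    have e2 : M ^ ((3:ℝ)/2) = 4 * a / c := by
      rw [hM, ← Real.rpow_mul (by positivity : (0:ℝ) ≤ 4 * a / c),
        show (2:ℝ)/3 * (3/2) = 1 by norm_num, Real.rpow_one]
    rw [e1, e2]
    field_simp
  have hγM : lam - M ≤ γ := by
    by_contra h
    push_neg at h
    obtain ⟨x, hx1, hx2⟩ : ∃ x, γ < x ∧ x < lam - M :=
      ⟨(γ + (lam - M)) / 2, by linarith, by linarith⟩
    have hxIcc : x ∈ Set.Icc (lam - δ) lam := ⟨by linarith, by linarith⟩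
    have hFxl := hLow x hxIcc
    have hMx : M < lam - x := by linarith
    have h32 : Real.sqrt M * M < Real.sqrt (lam - x) * (lam - x) := by
      nlinarith [Real.sqrt_lt_sqrt hM0.le hMx, Real.sqrt_nonneg M,
        Real.sqrt_pos.2 (show (0:ℝ) < lam - x by linarith), Real.sqrt_nonneg (lam - x)]
    have hxS : x ∈ S := by
      show a < F x
      refine lt_of_lt_of_le ?_ hFxl
      nlinarith [mul_lt_mul_of_pos_left h32 (show (0:ℝ) < c / 4 by positivity)]
    have := le_csSup hbdd hxS
    linarith
  constructor
  · -- c' (j/n)^{2/3} ≤ lam - γ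
    refine le_trans ?_ hKle
    rw [← Real.mul_rpow (by positivity) (by positivity), hK]
    apply Real.rpow_le_rpow (by positivity) ?_ (by norm_num)
    have heq : 1 / (2 * C) * ((j:ℝ) / n) = (j:ℝ) / (2 * C * n) := by
      field_simp
    rw [heq, hadef, div_div, div_le_div_iff₀ (by positivity) (by positivity)]
    nlinarith [mul_nonneg (mul_nonneg (show (0:ℝ) ≤ (j:ℝ) - 2 by linarith) hn0.le) hC0.le]
  · -- lam - γ ≤ C' (j/n)^{2/3}
    have h1 : lam - γ ≤ M := by linarith
    refine h1.trans ?_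
    rw [← Real.mul_rpow (by positivity) (by positivity), hM]
    apply Real.rpow_le_rpow (by positivity) ?_ (by norm_num)
    have heq : 4 / c * ((j:ℝ) / n) = 4 * ((j:ℝ) / n) / c := by ring
    rw [heq, hadef]
    rw [div_le_div_iff_of_pos_right hc, mul_le_mul_iff_right₀ (by norm_num : (0:ℝ) < 4),
      div_le_div_iff_of_pos_right hn0]
    linarith
end

section
/- Let (x_i)_{i=1}^{N} be independent real random variables with E x_i = 0, E x_i² ≤ n⁻¹, and E|√n·x_i|^k ≤ C_k for every fixed k. Let (A_i) be deterministic complex numbers. Then for every ε > 0 and D > 0 there exists n₀ such that for n ≥ n₀: P( |Σ_i A_i x_i| > n^ε · n^{−1/2} (Σ_i |A_i|²)^{1/2} ) ≤ n^{−D}. -/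
open MeasureTheory ProbabilityTheory Finset


lemma aux_abs_pow_le (y : ℝ) {q p : ℕ} (hq : q ≤ 2 * p) :
    |y| ^ q ≤ 1 + y ^ (2 * p) := by
  have h2 : (0:ℝ) ≤ y ^ (2 * p) := by
    rw [pow_mul]; exact pow_nonneg (sq_nonneg y) p
  rcases le_total |y| 1 with h | h
  · have := pow_le_one₀ (abs_nonneg y) h (n := q)
    linarith
  · have h1 : |y| ^ q ≤ |y| ^ (2 * p) := pow_le_pow_right₀ h hq
    have h3 : |y| ^ (2 * p) = y ^ (2 * p) := by
      rw [← abs_pow, abs_of_nonneg h2]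
    linarith

lemma key_moment {Ω : Type*} [MeasurableSpace Ω] (P : Measure Ω) [IsProbabilityMeasure P]
    {N : ℕ} (x : Fin N → Ω → ℝ) (hmeas : ∀ i, Measurable (x i))
    (hindep : iIndepFun x P)
    (hmean : ∀ i, ∫ ω, x i ω ∂P = 0)
    (hmomint : ∀ i (k : ℕ), Integrable (fun ω => |x i ω| ^ k) P)
    (n : ℕ) (hn : 1 ≤ n) (p : ℕ) (hp : 1 ≤ p) (C : ℝ) (hC0 : 0 ≤ C)
    (hC : ∀ j : ℕ, j ≤ 2 * p → ∀ i, ∫ ω, |x i ω| ^ j ∂P ≤ C / Real.sqrt n ^ j)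
    (a : Fin N → ℝ) (ha : ∀ i, a i ^ 2 ≤ n)
    (s : Finset (Fin N)) :
    (∀ m : ℕ, Integrable (fun ω => (∑ i ∈ s, a i * x i ω) ^ m) P) ∧
    1 + ∫ ω, (∑ i ∈ s, a i * x i ω) ^ (2 * p) ∂P ≤
      Real.exp (C * 4 ^ p * (∑ i ∈ s, a i ^ 2) / n) := by
  classical
  have hn0 : (0:ℝ) < n := by exact_mod_cast hn
  have hsq : (0:ℝ) < Real.sqrt n := Real.sqrt_pos.2 hn0
  -- integrability of powers of x i
  have hxj : ∀ i (j : ℕ), Integrable (fun ω => (x i ω) ^ j) P := by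
    intro i j
    refine (hmomint i j).mono' (((hmeas i).pow_const j).aestronglyMeasurable)
      (Filter.Eventually.of_forall fun ω => ?_)
    rw [Real.norm_eq_abs, abs_pow]
  induction s using Finset.induction_on with
  | empty =>
      constructor
      · intro m
        simpa using integrable_const ((0:ℝ) ^ m)
      · simp only [Finset.sum_empty]
        rw [zero_pow (by omega : 2 * p ≠ 0), integral_zero]
        simp
  | @insert k s' hk ih =>
      set S' : Ω → ℝ := fun ω => ∑ i ∈ s', a i * x i ω with hS'
      set yk : Ω → ℝ := fun ω => a k * x k ω with hyk
      -- independence of S' and yk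
      have hY : iIndepFun
          (fun i => fun ω => a i * x i ω) P := by
        have := hindep.comp (fun i (t : ℝ) => a i * t)
          (fun i => measurable_const_mul (a i))
        exact this
      have hYmeas : ∀ i, Measurable (fun ω => a i * x i ω) :=
        fun i => (hmeas i).const_mul (a i)
      have hindSy : IndepFun S' yk P := by
        have h := iIndepFun.indepFun_finset_sum_of_notMem hY hYmeas hk
        have hfun : (∑ j ∈ s', fun ω => a j * x j ω) = S' := by
          funext ω; simp [hS']
        rwa [hfun] at h
      have hindPow : ∀ q j : ℕ,
          IndepFun (fun ω => S' ω ^ q) (fun ω => yk ω ^ j) P := by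
        intro q j
        exact hindSy.comp (measurable_id.pow_const q) (measurable_id.pow_const j)
      -- integrability of powers of yk
      have hykj : ∀ j : ℕ, Integrable (fun ω => yk ω ^ j) P := by
        intro j
        simpa [hyk, mul_pow] using (hxj k j).const_mul (a k ^ j)
      -- integrability of products
      have hint_term : ∀ q j : ℕ, Integrable (fun ω => S' ω ^ q * yk ω ^ j) P := by
        intro q j
        exact (hindPow q j).integrable_mul (ih.1 q) (hykj j)
      -- integrability part for insert
      have hSint : ∀ m : ℕ,
          Integrable (fun ω => (∑ i ∈ insert k s', a i * x i ω) ^ m) P := by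
        intro m
        have hfun : (fun ω => (∑ i ∈ insert k s', a i * x i ω) ^ m)
            = fun ω => ∑ j ∈ Finset.range (m + 1),
                S' ω ^ j * yk ω ^ (m - j) * (m.choose j : ℝ) := by
          funext ω
          rw [Finset.sum_insert hk, add_comm, add_pow]
        rw [hfun]
        exact integrable_finset_sum _ fun j _ => (hint_term j (m - j)).mul_const _
      refine ⟨hSint, ?_⟩
      -- nonnegativity of I'
      set I' : ℝ := ∫ ω, S' ω ^ (2 * p) ∂P with hI'
      have hI'0 : 0 ≤ I' := by
        refine integral_nonneg fun ω => ?_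
        rw [pow_mul]; exact pow_nonneg (sq_nonneg _) p
      -- bound |∫ S'^j| ≤ 1 + I'
      have habsS : ∀ j : ℕ, j ≤ 2 * p → |∫ ω, S' ω ^ j ∂P| ≤ 1 + I' := by
        intro j hj
        have h1 : |∫ ω, S' ω ^ j ∂P| ≤ ∫ ω, |S' ω ^ j| ∂P := by
          simpa [Real.norm_eq_abs] using
            norm_integral_le_integral_norm (μ := P) (fun ω => S' ω ^ j)
        have h2 : ∫ ω, |S' ω ^ j| ∂P ≤ ∫ ω, 1 + S' ω ^ (2 * p) ∂P := by
          refine integral_mono (ih.1 j).abs ((integrable_const 1).add (ih.1 (2 * p)))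
            fun ω => ?_
          rw [abs_pow]
          exact aux_abs_pow_le _ hj
        have h3 : ∫ ω, (1 + S' ω ^ (2 * p)) ∂P = 1 + I' := by
          rw [integral_add (integrable_const 1) (ih.1 (2 * p))]
          simp [hI']; rfl
        linarith
      -- bound |∫ yk^j| ≤ C * a k ^ 2 / n  for 2 ≤ j ≤ 2p
      have habsy : ∀ j : ℕ, 2 ≤ j → j ≤ 2 * p →
          |∫ ω, yk ω ^ j ∂P| ≤ C * a k ^ 2 / n := by
        intro j h2j hj
        have hEq : ∫ ω, yk ω ^ j ∂P = a k ^ j * ∫ ω, x k ω ^ j ∂P := by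
          simp only [hyk, mul_pow]
          rw [integral_const_mul]
        have h1 : |∫ ω, x k ω ^ j ∂P| ≤ ∫ ω, |x k ω| ^ j ∂P := by
          have := norm_integral_le_integral_norm (μ := P) (fun ω => x k ω ^ j)
          simpa [Real.norm_eq_abs, abs_pow] using this
        have h2 : ∫ ω, |x k ω| ^ j ∂P ≤ C / Real.sqrt n ^ j := hC j hj k
        have hak : |a k| ≤ Real.sqrt n := by
          have := ha k
          calc |a k| = Real.sqrt (a k ^ 2) := (Real.sqrt_sq_eq_abs _).symm
          _ ≤ Real.sqrt n := Real.sqrt_le_sqrt (by exact_mod_cast this)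
        have htle : (|a k| / Real.sqrt n) ^ j ≤ (|a k| / Real.sqrt n) ^ 2 := by
          refine pow_le_pow_of_le_one (by positivity) ?_ h2j
          rw [div_le_one hsq]; exact hak
        have hratio : |a k| ^ j / Real.sqrt n ^ j ≤ a k ^ 2 / n := by
          have h4 : (|a k| / Real.sqrt n) ^ 2 = a k ^ 2 / n := by
            rw [div_pow, sq_abs, Real.sq_sqrt hn0.le]
          rw [← div_pow]
          rw [← h4]
          exact htle
        calc |∫ ω, yk ω ^ j ∂P| = |a k| ^ j * |∫ ω, x k ω ^ j ∂P| := by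
              rw [hEq, abs_mul, abs_pow]
        _ ≤ |a k| ^ j * (C / Real.sqrt n ^ j) := by
              refine mul_le_mul_of_nonneg_left (le_trans h1 h2) (by positivity)
        _ = C * (|a k| ^ j / Real.sqrt n ^ j) := by ring
        _ ≤ C * (a k ^ 2 / n) := mul_le_mul_of_nonneg_left hratio hC0
        _ = C * a k ^ 2 / n := by ring
      -- expansion of the integral
      have hexp : ∫ ω, (∑ i ∈ insert k s', a i * x i ω) ^ (2 * p) ∂P
          = ∑ j ∈ Finset.range (2 * p + 1),
              (∫ ω, S' ω ^ j ∂P) * (∫ ω, yk ω ^ (2 * p - j) ∂P) * ((2 * p).choose j : ℝ) := by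
        have hfun : (fun ω => (∑ i ∈ insert k s', a i * x i ω) ^ (2 * p))
            = fun ω => ∑ j ∈ Finset.range (2 * p + 1),
                S' ω ^ j * yk ω ^ (2 * p - j) * ((2 * p).choose j : ℝ) := by
          funext ω
          rw [Finset.sum_insert hk, add_comm, add_pow]
        rw [hfun, integral_finset_sum _ fun j _ => (hint_term j (2 * p - j)).mul_const _]
        refine Finset.sum_congr rfl fun j _ => ?_
        rw [integral_mul_const]
        congr 1
        have := (hindPow j (2 * p - j)).integral_fun_mul_eq_mul_integral (ih.1 j).aestronglyMeasurable (hykj (2 * p - j)).aestronglyMeasurable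
        simpa using this
      -- bound each term
      set B : ℝ := C * a k ^ 2 / n with hB
      have hB0 : 0 ≤ B := by positivity
      have hterm : ∀ j ∈ Finset.range (2 * p + 1),
          (∫ ω, S' ω ^ j ∂P) * (∫ ω, yk ω ^ (2 * p - j) ∂P) * ((2 * p).choose j : ℝ)
          ≤ (if j = 2 * p then I' else ((2 * p).choose j : ℝ) * ((1 + I') * B)) := by
        intro j hj
        rw [Finset.mem_range] at hj
        rcases eq_or_lt_of_le (Nat.lt_succ_iff.mp hj) with hje | hjlt
        · subst hje
          simp only [if_pos rfl, Nat.sub_self, pow_zero, Nat.choose_self]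
          simp [hI']
        · rw [if_neg (by omega)]
          rcases eq_or_lt_of_le (Nat.lt_iff_add_one_le.mp hjlt) with hje1 | hjlt1
          · -- j + 1 = 2p : exponent of yk is 1, term is zero
            have he : 2 * p - j = 1 := by omega
            have hzero : ∫ ω, yk ω ^ (2 * p - j) ∂P = 0 := by
              rw [he]
              simp only [pow_one, hyk]
              rw [integral_const_mul, hmean k, mul_zero]
            rw [hzero, mul_zero, zero_mul]
            positivity
          · -- 2 ≤ 2p - j
            have h2j : 2 ≤ 2 * p - j := by omega
            have hjle : 2 * p - j ≤ 2 * p := by omega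
            have h1 := habsS j (by omega)
            have h2 := habsy (2 * p - j) h2j hjle
            calc (∫ ω, S' ω ^ j ∂P) * (∫ ω, yk ω ^ (2 * p - j) ∂P) * ((2 * p).choose j : ℝ)
                ≤ |(∫ ω, S' ω ^ j ∂P) * (∫ ω, yk ω ^ (2 * p - j) ∂P) * ((2 * p).choose j : ℝ)| :=
                  le_abs_self _
            _ = |∫ ω, S' ω ^ j ∂P| * |∫ ω, yk ω ^ (2 * p - j) ∂P| * ((2 * p).choose j : ℝ) := by
                  rw [abs_mul, abs_mul, Nat.abs_cast]
            _ ≤ (1 + I') * B * ((2 * p).choose j : ℝ) := by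
                  refine mul_le_mul_of_nonneg_right ?_ (by positivity)
                  exact mul_le_mul h1 h2 (abs_nonneg _) (by linarith)
            _ = ((2 * p).choose j : ℝ) * ((1 + I') * B) := by ring
      -- sum the bounds
      have hsum : ∫ ω, (∑ i ∈ insert k s', a i * x i ω) ^ (2 * p) ∂P
          ≤ I' + (1 + I') * (B * 4 ^ p) := by
        rw [hexp]
        calc ∑ j ∈ Finset.range (2 * p + 1),
              (∫ ω, S' ω ^ j ∂P) * (∫ ω, yk ω ^ (2 * p - j) ∂P) * ((2 * p).choose j : ℝ)
            ≤ ∑ j ∈ Finset.range (2 * p + 1),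
              (if j = 2 * p then I' else ((2 * p).choose j : ℝ) * ((1 + I') * B)) :=
              Finset.sum_le_sum hterm
        _ = (∑ j ∈ Finset.range (2 * p),
              ((2 * p).choose j : ℝ) * ((1 + I') * B)) + I' := by
              rw [Finset.sum_range_succ, if_pos rfl]
              congr 1
              refine Finset.sum_congr rfl fun j hj => ?_
              rw [Finset.mem_range] at hj
              rw [if_neg (by omega)]
        _ ≤ (∑ j ∈ Finset.range (2 * p + 1),
              ((2 * p).choose j : ℝ) * ((1 + I') * B)) + I' := by
              refine add_le_add_left (Finset.sum_le_sum_of_subset_of_nonneg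
                (Finset.range_subset_range.2 (by omega))
                (fun j _ _ => by positivity)) I'
        _ = (4 : ℝ) ^ p * ((1 + I') * B) + I' := by
              rw [← Finset.sum_mul]
              congr 2
              rw [← Nat.cast_sum, Nat.sum_range_choose]
              push_cast
              rw [pow_mul]
              norm_num
        _ = I' + (1 + I') * (B * 4 ^ p) := by ring
      -- combine with induction hypothesis
      have hih := ih.2
      have hBe : 1 + B * 4 ^ p ≤ Real.exp (B * 4 ^ p) := by
        have := Real.add_one_le_exp (B * 4 ^ p)
        linarith
      have hmain : 1 + ∫ ω, (∑ i ∈ insert k s', a i * x i ω) ^ (2 * p) ∂P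
          ≤ Real.exp (C * 4 ^ p * (∑ i ∈ s', a i ^ 2) / n) * Real.exp (B * 4 ^ p) := by
        have h1 : 1 + ∫ ω, (∑ i ∈ insert k s', a i * x i ω) ^ (2 * p) ∂P
            ≤ (1 + I') * (1 + B * 4 ^ p) := by nlinarith
        refine le_trans h1 ?_
        refine mul_le_mul hih hBe (by positivity) (Real.exp_nonneg _)
      rw [← Real.exp_add] at hmain
      refine le_trans hmain (le_of_eq ?_)
      congr 1
      rw [Finset.sum_insert hk, hB]
      field_simp
      ring

lemma aux_markov {Ω : Type*} [MeasurableSpace Ω] (P : Measure Ω) [IsProbabilityMeasure P]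
    (f : Ω → ℝ) (q : ℕ) (hf : Integrable (fun ω => f ω ^ (2 * q)) P)
    {t : ℝ} (ht : 0 < t) :
    P {ω | t < |f ω|} ≤ ENNReal.ofReal ((∫ ω, f ω ^ (2 * q) ∂P) / t ^ (2 * q)) := by
  have hnn : 0 ≤ᵐ[P] fun ω => f ω ^ (2 * q) :=
    Filter.Eventually.of_forall fun ω => by
      show (0:ℝ) ≤ f ω ^ (2 * q)
      rw [pow_mul]; positivity
  have hsub : {ω | t < |f ω|} ⊆ {ω | t ^ (2 * q) ≤ f ω ^ (2 * q)} := by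
    intro ω hω
    simp only [Set.mem_setOf_eq] at *
    calc t ^ (2 * q) ≤ |f ω| ^ (2 * q) := pow_le_pow_left₀ ht.le hω.le _
    _ = f ω ^ (2 * q) := by
        rw [← abs_pow, abs_of_nonneg (by rw [pow_mul]; positivity)]
  have hm := mul_meas_ge_le_integral_of_nonneg hnn hf (t ^ (2 * q))
  have htp : (0:ℝ) < t ^ (2 * q) := pow_pos ht _
  have h1 : (P {ω | t ^ (2 * q) ≤ f ω ^ (2 * q)}).toReal
      ≤ (∫ ω, f ω ^ (2 * q) ∂P) / t ^ (2 * q) := by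
    rw [le_div_iff₀ htp]
    rw [measureReal_def] at hm
    linarith
  calc P {ω | t < |f ω|} ≤ P {ω | t ^ (2 * q) ≤ f ω ^ (2 * q)} := measure_mono hsub
  _ = ENNReal.ofReal ((P {ω | t ^ (2 * q) ≤ f ω ^ (2 * q)}).toReal) :=
      (ENNReal.ofReal_toReal (measure_ne_top _ _)).symm
  _ ≤ _ := ENNReal.ofReal_le_ofReal h1

lemma aux_part {Ω : Type*} [MeasurableSpace Ω] (P : Measure Ω) [IsProbabilityMeasure P]
    {N : ℕ} (x : Fin N → Ω → ℝ) (hmeas : ∀ i, Measurable (x i))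
    (hindep : iIndepFun x P)
    (hmean : ∀ i, ∫ ω, x i ω ∂P = 0)
    (hmomint : ∀ i (k : ℕ), Integrable (fun ω => |x i ω| ^ k) P)
    (n : ℕ) (hn : 1 ≤ n) (p : ℕ) (hp : 1 ≤ p) (C : ℝ) (hC0 : 0 ≤ C)
    (hC : ∀ j : ℕ, j ≤ 2 * p → ∀ i, ∫ ω, |x i ω| ^ j ∂P ≤ C / Real.sqrt n ^ j)
    (r : Fin N → ℝ) (sA : ℝ) (hsA : 0 < sA) (hr : ∑ i, r i ^ 2 ≤ sA ^ 2)
    {t : ℝ} (ht : 0 < t) :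
    P {ω | t * sA / Real.sqrt n < |∑ i, r i * x i ω|} ≤
      ENNReal.ofReal (Real.exp (C * 4 ^ p) / t ^ (2 * p)) := by
  have hn0 : (0:ℝ) < n := by exact_mod_cast hn
  have hsq : (0:ℝ) < Real.sqrt n := Real.sqrt_pos.2 hn0
  set b : Fin N → ℝ := fun i => Real.sqrt n * r i / sA with hb
  have hb2 : ∀ i, b i ^ 2 = (n : ℝ) * r i ^ 2 / sA ^ 2 := by
    intro i
    rw [hb]
    field_simp
    rw [Real.sq_sqrt hn0.le]; ring
  have hbsum : ∑ i, b i ^ 2 ≤ (n : ℝ) := by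
    have h1 : ∑ i, b i ^ 2 = (n : ℝ) / sA ^ 2 * ∑ i, r i ^ 2 := by
      rw [Finset.mul_sum]
      refine Finset.sum_congr rfl fun i _ => ?_
      rw [hb2 i]; ring
    rw [h1]
    rw [div_mul_eq_mul_div, div_le_iff₀ (by positivity)]
    calc (n : ℝ) * ∑ i, r i ^ 2 ≤ (n : ℝ) * sA ^ 2 :=
      mul_le_mul_of_nonneg_left hr hn0.le
    _ = (n:ℝ) * sA ^ 2 := rfl
  have hbi : ∀ i, b i ^ 2 ≤ (n : ℝ) := by
    intro i
    rw [hb2 i]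
    rw [div_le_iff₀ (by positivity)]
    have h2 : r i ^ 2 ≤ sA ^ 2 := by
      refine le_trans ?_ hr
      exact Finset.single_le_sum (f := fun i => r i ^ 2) (fun i _ => sq_nonneg _)
        (Finset.mem_univ i)
    nlinarith
  obtain ⟨hint, hmom'⟩ := key_moment P x hmeas hindep hmean hmomint n hn p hp C hC0 hC b hbi
    Finset.univ
  set f : Ω → ℝ := fun ω => ∑ i, b i * x i ω with hf
  have hfI : ∫ ω, f ω ^ (2 * p) ∂P ≤ Real.exp (C * 4 ^ p) := by
    have h1 : Real.exp (C * 4 ^ p * (∑ i, b i ^ 2) / n) ≤ Real.exp (C * 4 ^ p) := by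
      refine Real.exp_le_exp.2 ?_
      rw [div_le_iff₀ hn0]
      calc C * 4 ^ p * (∑ i, b i ^ 2) ≤ C * 4 ^ p * n :=
        mul_le_mul_of_nonneg_left hbsum (by positivity)
      _ = C * 4 ^ p * n := rfl
    nlinarith [hmom', Real.exp_pos (C * 4 ^ p * (∑ i, b i ^ 2) / n)]
  have hset : {ω | t * sA / Real.sqrt n < |∑ i, r i * x i ω|} = {ω | t < |f ω|} := by
    ext ω
    simp only [Set.mem_setOf_eq]
    have hfeq : f ω = Real.sqrt n / sA * ∑ i, r i * x i ω := by
      rw [hf, Finset.mul_sum]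
      refine Finset.sum_congr rfl fun i _ => ?_
      rw [hb]; ring
    rw [hfeq, abs_mul, abs_of_pos (by positivity : (0:ℝ) < Real.sqrt n / sA)]
    rw [div_lt_iff₀ hsq, div_mul_eq_mul_div, lt_div_iff₀ hsA]
    constructor
    · intro h; nlinarith [abs_nonneg (∑ i, r i * x i ω)]
    · intro h; nlinarith [abs_nonneg (∑ i, r i * x i ω)]
  rw [hset]
  refine le_trans (aux_markov P f p (hint (2 * p)) ht) (ENNReal.ofReal_le_ofReal ?_)
  gcongr

set_option maxHeartbeats 1000000 in
/-- Linear large-deviation bound. For independent centered real random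
variables `x_i` with variance at most `n⁻¹` and all moments of `√n·x_i` bounded, and
deterministic complex coefficients `A_i`, for every `ε, D > 0` one has, for large `n`,
`P(|∑ A_i x_i| > n^ε n^{-1/2} (∑|A_i|²)^{1/2}) ≤ n^{-D}`. -/
theorem stmt_15 (Ω : Type*) [MeasurableSpace Ω] (P : Measure Ω) [IsProbabilityMeasure P]
    (Cm : ℕ → ℝ) (N : ℕ → ℕ) (x : ∀ n : ℕ, Fin (N n) → Ω → ℝ)
    (A : ∀ n : ℕ, Fin (N n) → ℂ)
    (hmeas : ∀ n i, Measurable (x n i))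
    (hindep : ∀ n, iIndepFun (x n) P)
    (hmean : ∀ n i, ∫ ω, x n i ω ∂P = 0)
    (hvar : ∀ n : ℕ, 1 ≤ n → ∀ i, ∫ ω, (x n i ω) ^ 2 ∂P ≤ 1 / n)
    (hmomint : ∀ n i (k : ℕ), Integrable (fun ω => |x n i ω| ^ k) P)
    (hmom : ∀ (k n : ℕ) (i : Fin (N n)),
      ∫ ω, |Real.sqrt n * x n i ω| ^ k ∂P ≤ Cm k) :
    ∀ ε : ℝ, 0 < ε → ∀ D : ℝ, 0 < D → ∃ n₀ : ℕ, ∀ n ≥ n₀,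
      P {ω | (n : ℝ) ^ ε * (n : ℝ) ^ (-(1 / 2 : ℝ)) *
            Real.sqrt (∑ i, ‖A n i‖ ^ 2) <
          ‖∑ i, A n i * (x n i ω : ℂ)‖} ≤
        ENNReal.ofReal ((n : ℝ) ^ (-D)) := by
  intro ε hε D hD
  set p : ℕ := max 1 ⌈(D + 1) / (2 * ε)⌉₊ with hpdef
  have hp1 : 1 ≤ p := le_max_left _ _
  have hpε : D + 1 ≤ 2 * p * ε := by
    have h1 : (D + 1) / (2 * ε) ≤ (⌈(D + 1) / (2 * ε)⌉₊ : ℝ) := Nat.le_ceil _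
    have h2 : ((⌈(D + 1) / (2 * ε)⌉₊ : ℕ) : ℝ) ≤ (p : ℝ) := by
      exact_mod_cast le_max_right 1 ⌈(D + 1) / (2 * ε)⌉₊
    have h3 : (D + 1) / (2 * ε) ≤ (p : ℝ) := le_trans h1 h2
    rw [div_le_iff₀ (by positivity)] at h3
    nlinarith
  set C : ℝ := 1 + ∑ j ∈ Finset.range (2 * p + 1), |Cm j| with hCdef
  have hC0 : 0 ≤ C := by positivity
  have hCmle : ∀ j : ℕ, j ≤ 2 * p → Cm j ≤ C := by
    intro j hj
    have h1 : |Cm j| ≤ ∑ j ∈ Finset.range (2 * p + 1), |Cm j| :=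
      Finset.single_le_sum (f := fun j => |Cm j|) (fun _ _ => abs_nonneg _)
        (Finset.mem_range.2 (by omega))
    calc Cm j ≤ |Cm j| := le_abs_self _
    _ ≤ _ := h1
    _ ≤ C := by rw [hCdef]; linarith
  set M : ℝ := Real.exp (C * 4 ^ p) with hM
  have hM0 : 0 < M := Real.exp_pos _
  refine ⟨max 2 ⌈2 * 4 ^ p * M⌉₊, fun n hn => ?_⟩
  have hn2 : 2 ≤ n := le_trans (le_max_left _ _) hn
  have hn1 : 1 ≤ n := by omega
  have hnR : (1:ℝ) ≤ (n:ℝ) := by exact_mod_cast hn1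
  have hn0 : (0:ℝ) < (n:ℝ) := by linarith
  have hsq : (0:ℝ) < Real.sqrt n := Real.sqrt_pos.2 hn0
  have hnM : 2 * 4 ^ p * M ≤ (n : ℝ) := by
    have h1 : (⌈2 * 4 ^ p * M⌉₊ : ℕ) ≤ n := le_trans (le_max_right _ _) hn
    calc 2 * 4 ^ p * M ≤ (⌈2 * 4 ^ p * M⌉₊ : ℝ) := Nat.le_ceil _
    _ ≤ (n : ℝ) := by exact_mod_cast h1
  -- the moment hypothesis for key lemma
  have hCn : ∀ j : ℕ, j ≤ 2 * p → ∀ i, ∫ ω, |x n i ω| ^ j ∂P ≤ C / Real.sqrt n ^ j := by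
    intro j hj i
    have h0 := hmom j n i
    have heq : (fun ω => |Real.sqrt n * x n i ω| ^ j)
        = fun ω => Real.sqrt n ^ j * |x n i ω| ^ j := by
      funext ω
      rw [abs_mul, abs_of_nonneg (Real.sqrt_nonneg _), mul_pow]
    rw [heq, integral_const_mul] at h0
    have hsqj : (0:ℝ) < Real.sqrt n ^ j := pow_pos hsq j
    rw [le_div_iff₀ hsqj]
    calc (∫ ω, |x n i ω| ^ j ∂P) * Real.sqrt n ^ j
        = Real.sqrt n ^ j * ∫ ω, |x n i ω| ^ j ∂P := by ring
    _ ≤ Cm j := h0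
    _ ≤ C := hCmle j hj
  set sA : ℝ := Real.sqrt (∑ i, ‖A n i‖ ^ 2) with hsA
  by_cases hs : (∑ i, ‖A n i‖ ^ 2) = 0
  · -- all coefficients vanish
    have hA0 : ∀ i, A n i = 0 := by
      intro i
      have h1 := (Finset.sum_eq_zero_iff_of_nonneg
        (fun i _ => sq_nonneg (‖A n i‖))).1 hs i (Finset.mem_univ i)
      have h2 : ‖A n i‖ = 0 := by
        nlinarith [norm_nonneg (A n i)]
      exact norm_eq_zero.1 h2
    have hempty : {ω | (n : ℝ) ^ ε * (n : ℝ) ^ (-(1 / 2 : ℝ)) *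
            Real.sqrt (∑ i, ‖A n i‖ ^ 2) <
          ‖∑ i, A n i * (x n i ω : ℂ)‖} = ∅ := by
      ext ω
      simp [hA0, hs]
    rw [hempty]
    simp
  · have hsum0 : (0:ℝ) ≤ ∑ i, ‖A n i‖ ^ 2 :=
      Finset.sum_nonneg fun i _ => sq_nonneg _
    have hsumpos : (0:ℝ) < ∑ i, ‖A n i‖ ^ 2 := lt_of_le_of_ne hsum0 (Ne.symm hs)
    have hsApos : 0 < sA := Real.sqrt_pos.2 hsumpos
    have hsA2 : sA ^ 2 = ∑ i, ‖A n i‖ ^ 2 := Real.sq_sqrt hsum0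
    set t : ℝ := (n : ℝ) ^ ε / 2 with htdef
    have ht : 0 < t := by
      have : (0:ℝ) < (n:ℝ) ^ ε := Real.rpow_pos_of_pos hn0 ε
      positivity
    -- threshold identity
    have hhalf : (n : ℝ) ^ ε * (n : ℝ) ^ (-(1 / 2 : ℝ)) * sA / 2 = t * sA / Real.sqrt n := by
      have h1 : (n : ℝ) ^ (-(1 / 2 : ℝ)) = (Real.sqrt n)⁻¹ := by
        rw [Real.rpow_neg hn0.le, Real.sqrt_eq_rpow]
      rw [h1, htdef]
      field_simp
    -- real and imaginary coefficient sums
    have hre : ∑ i, ((A n i).re) ^ 2 ≤ sA ^ 2 := by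
      rw [hsA2]
      refine Finset.sum_le_sum fun i _ => ?_
      rw [Complex.sq_norm, Complex.normSq_apply]
      nlinarith [sq_nonneg ((A n i).im)]
    have him : ∑ i, ((A n i).im) ^ 2 ≤ sA ^ 2 := by
      rw [hsA2]
      refine Finset.sum_le_sum fun i _ => ?_
      rw [Complex.sq_norm, Complex.normSq_apply]
      nlinarith [sq_nonneg ((A n i).re)]
    -- event inclusion
    have hincl : {ω | (n : ℝ) ^ ε * (n : ℝ) ^ (-(1 / 2 : ℝ)) * sA <
          ‖∑ i, A n i * (x n i ω : ℂ)‖} ⊆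
        {ω | t * sA / Real.sqrt n < |∑ i, (A n i).re * x n i ω|} ∪
        {ω | t * sA / Real.sqrt n < |∑ i, (A n i).im * x n i ω|} := by
      intro ω hω
      simp only [Set.mem_setOf_eq] at hω
      by_contra hcon
      simp only [Set.mem_union, Set.mem_setOf_eq, not_or, not_lt] at hcon
      obtain ⟨h1, h2⟩ := hcon
      have hz : (∑ i, A n i * (x n i ω : ℂ)).re = ∑ i, (A n i).re * x n i ω := by
        rw [Complex.re_sum]
        refine Finset.sum_congr rfl fun i _ => ?_
        simp [Complex.mul_re]
      have hz' : (∑ i, A n i * (x n i ω : ℂ)).im = ∑ i, (A n i).im * x n i ω := by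
        rw [Complex.im_sum]
        refine Finset.sum_congr rfl fun i _ => ?_
        simp [Complex.mul_im]
      have h3 := Complex.norm_le_abs_re_add_abs_im (∑ i, A n i * (x n i ω : ℂ))
      rw [hz, hz'] at h3
      rw [← hhalf] at h1 h2
      linarith
    -- apply the two bounds
    have hbre := aux_part P (x n) (hmeas n) (hindep n) (hmean n) (hmomint n) n hn1 p hp1 C hC0
      hCn (fun i => (A n i).re) sA hsApos hre ht
    have hbim := aux_part P (x n) (hmeas n) (hindep n) (hmean n) (hmomint n) n hn1 p hp1 C hC0
      hCn (fun i => (A n i).im) sA hsApos him ht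
    -- final numeric bound
    have hnum : M / t ^ (2 * p) + M / t ^ (2 * p) ≤ (n : ℝ) ^ (-D) := by
      have htp : t ^ (2 * p) = (n : ℝ) ^ (ε * (2 * p)) / 4 ^ p := by
        rw [htdef, div_pow]
        congr 1
        · rw [← Real.rpow_natCast ((n:ℝ) ^ ε) (2 * p), ← Real.rpow_mul hn0.le]
          norm_num
        · rw [pow_mul]; norm_num
      have hrp : (0:ℝ) < (n : ℝ) ^ (ε * (2 * p)) := Real.rpow_pos_of_pos hn0 _
      have hkey : 2 * 4 ^ p * M ≤ (n : ℝ) ^ (ε * (2 * p) - D) := by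
        calc 2 * 4 ^ p * M ≤ (n : ℝ) := hnM
        _ = (n : ℝ) ^ (1:ℝ) := (Real.rpow_one _).symm
        _ ≤ (n : ℝ) ^ (ε * (2 * p) - D) := by
            refine Real.rpow_le_rpow_of_exponent_le hnR ?_
            push_cast
            linarith
      have hfinal : 2 * 4 ^ p * M ≤ (n : ℝ) ^ (ε * (2 * p)) * (n : ℝ) ^ (-D) := by
        rw [← Real.rpow_add hn0]
        calc 2 * 4 ^ p * M ≤ (n : ℝ) ^ (ε * (2 * p) - D) := hkey
        _ = (n : ℝ) ^ (ε * (2 * p) + -D) := by ring_nf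
      rw [htp, div_div_eq_mul_div, ← add_div, div_le_iff₀ hrp]
      calc M * 4 ^ p + M * 4 ^ p = 2 * 4 ^ p * M := by ring
      _ ≤ (n : ℝ) ^ (ε * (2 * (p:ℝ))) * (n : ℝ) ^ (-D) := hfinal
      _ = (n:ℝ) ^ (-D) * (n:ℝ) ^ (ε * (2 * (p:ℝ))) := by ring
    calc P _ ≤ P ({ω | t * sA / Real.sqrt n < |∑ i, (A n i).re * x n i ω|} ∪
          {ω | t * sA / Real.sqrt n < |∑ i, (A n i).im * x n i ω|}) := measure_mono hincl
    _ ≤ P {ω | t * sA / Real.sqrt n < |∑ i, (A n i).re * x n i ω|}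
        + P {ω | t * sA / Real.sqrt n < |∑ i, (A n i).im * x n i ω|} := measure_union_le _ _
    _ ≤ ENNReal.ofReal (M / t ^ (2 * p)) + ENNReal.ofReal (M / t ^ (2 * p)) :=
        add_le_add hbre hbim
    _ = ENNReal.ofReal (M / t ^ (2 * p) + M / t ^ (2 * p)) :=
        (ENNReal.ofReal_add (by positivity) (by positivity)).symm
    _ ≤ ENNReal.ofReal ((n : ℝ) ^ (-D)) := ENNReal.ofReal_le_ofReal hnum
end
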